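/- Let p be a prime. Define the complex matrix C'' of size p² × p³ whose rows are indexed by pairs (φ, γ) ∈ (ZMod p)² and whose columns are indexed by triples (a, b, c) ∈ (ZMod p)³, with entries C''((φ,γ), (a,b,c)) = (1/p)·e_p(γ·(a·φ + c) + b·φ). Then every column of C'' is a unit vector in ℂ^{p²}, and the coherence of C'' equals 1/p; more precisely, for distinct column indices (a,b,c) ≠ (a',b',c'), the inner product of the corresponding columns has absolute value 1/p when a ≠ a' and 0 when a = a', and the maximum over all distinct pairs is 1/p. -/

import Mathlib

open scoped ComplexInnerProductSpace

/-- The canonical additive character of `ZMod p`: `ep p x = exp(2πi·x̂/p)`. -/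
noncomputable def ep (p : ℕ) (x : ZMod p) : ℂ :=
  Complex.exp (2 * Real.pi * Complex.I * (x.val : ℂ) / (p : ℂ))

section Aux

variable {p : ℕ} [NeZero p]

lemma ep_eq_stdAddChar (x : ZMod p) : ep p x = ZMod.stdAddChar x := by
  rw [ZMod.stdAddChar_apply, ZMod.toCircle_apply, ep]

lemma stdAddChar_conj (x : ZMod p) :
    (starRingEnd ℂ) (ZMod.stdAddChar x) = ZMod.stdAddChar (-x) := by
  rw [ZMod.stdAddChar_apply, ZMod.stdAddChar_apply, ← Circle.coe_inv_eq_conj,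
    ← AddChar.map_neg_eq_inv]

lemma stdAddChar_norm (x : ZMod p) : ‖(ZMod.stdAddChar x : ℂ)‖ = 1 := by
  rw [ZMod.stdAddChar_apply, Circle.norm_coe]

lemma sum_stdAddChar_mul (hp : p.Prime) (u : ZMod p) :
    ∑ x : ZMod p, ZMod.stdAddChar (x * u) = if u = 0 then (p : ℂ) else 0 := by
  classical
  have h := AddChar.sum_eq_ite ((ZMod.stdAddChar (N := p)).mulShift u)
  simp only [AddChar.mulShift_apply] at h
  have h2 : ∑ x : ZMod p, ZMod.stdAddChar (x * u)
      = ∑ x : ZMod p, ZMod.stdAddChar (u * x) := by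
    simp [mul_comm]
  rw [h2, h]
  have hiff : (ZMod.stdAddChar (N := p)).mulShift u = 0 ↔ u = 0 := by
    constructor
    · intro h0
      by_contra hu
      exact (ZMod.isPrimitive_stdAddChar p hu) (by rw [AddChar.one_eq_zero]; exact h0)
    · rintro rfl
      rw [AddChar.mulShift_zero, AddChar.one_eq_zero]
  split_ifs with h1 h3 h3
  · simp [ZMod.card]
  · exact absurd (hiff.mp h1) h3
  · exact absurd (hiff.mpr h3) h1
  · rfl

lemma sum_shift (hp : p.Prime) (u w : ZMod p) :
    ∑ γ : ZMod p, ZMod.stdAddChar (γ * u + w) =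
      if u = 0 then (p : ℂ) * ZMod.stdAddChar w else 0 := by
  simp only [AddChar.map_add_eq_mul]
  rw [← Finset.sum_mul, sum_stdAddChar_mul hp]
  split_ifs <;> simp

lemma inner_v (hp : p.Prime)
    (v : ZMod p × ZMod p × ZMod p → EuclideanSpace ℂ (ZMod p × ZMod p))
    (hv : ∀ a b c : ZMod p, v (a, b, c) =
      WithLp.toLp 2 (fun φγ : ZMod p × ZMod p => (1 / (p : ℂ)) * ep p (φγ.2 * (a * φγ.1 + c) + b * φγ.1)))
    (a b c a' b' c' : ZMod p) :
    ⟪v (a, b, c), v (a', b', c')⟫ =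
      (1 / (p : ℂ)) ^ 2 * ∑ φ : ZMod p,
        (if (a' - a) * φ + (c' - c) = 0 then (p : ℂ) * ZMod.stdAddChar ((b' - b) * φ)
         else 0) := by
  rw [PiLp.inner_apply, Fintype.sum_prod_type, Finset.mul_sum]
  refine Finset.sum_congr rfl fun φ _ => ?_
  rw [← sum_shift hp, Finset.mul_sum]
  refine Finset.sum_congr rfl fun γ _ => ?_
  simp only [hv, RCLike.inner_apply, ep_eq_stdAddChar, map_mul, stdAddChar_conj]
  have hc : (starRingEnd ℂ) (1 / (p : ℂ)) = 1 / (p : ℂ) := by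
    simp
  rw [hc]
  rw [mul_comm (1 / (p : ℂ) * ZMod.stdAddChar (γ * (a' * φ + c') + b' * φ))]
  have harg : -(γ * (a * φ + c) + b * φ) + (γ * (a' * φ + c') + b' * φ)
      = γ * ((a' - a) * φ + (c' - c)) + (b' - b) * φ := by ring
  calc 1 / (p : ℂ) * ZMod.stdAddChar (-(γ * (a * φ + c) + b * φ))
        * (1 / (p : ℂ) * ZMod.stdAddChar (γ * (a' * φ + c') + b' * φ))
      = (1 / (p : ℂ)) ^ 2 * (ZMod.stdAddChar (-(γ * (a * φ + c) + b * φ))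
          * ZMod.stdAddChar (γ * (a' * φ + c') + b' * φ)) := by ring
    _ = (1 / (p : ℂ)) ^ 2
          * ZMod.stdAddChar (γ * ((a' - a) * φ + (c' - c)) + (b' - b) * φ) := by
        rw [← AddChar.map_add_eq_mul, harg]

end Aux

theorem stmt4 (p : ℕ) (hp : p.Prime) [NeZero p]
    (v : ZMod p × ZMod p × ZMod p → EuclideanSpace ℂ (ZMod p × ZMod p))
    (hv : ∀ a b c : ZMod p, v (a, b, c) =
      WithLp.toLp 2 (fun φγ : ZMod p × ZMod p => (1 / (p : ℂ)) * ep p (φγ.2 * (a * φγ.1 + c) + b * φγ.1))) :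
    (∀ q, ‖v q‖ = 1) ∧
    (∀ a b c a' b' c' : ZMod p, (a, b, c) ≠ (a', b', c') →
      (a ≠ a' → ‖⟪v (a, b, c), v (a', b', c')⟫‖ = 1 / p) ∧
      (a = a' → ⟪v (a, b, c), v (a', b', c')⟫ = 0)) ∧
    (∀ q q', q ≠ q' → ‖⟪v q, v q'⟫‖ ≤ 1 / p) ∧
    (∃ q q', q ≠ q' ∧ ‖⟪v q, v q'⟫‖ = 1 / p) := by
  classical
  haveI : Fact p.Prime := ⟨hp⟩
  have hp0 : (p : ℂ) ≠ 0 := by exact_mod_cast hp.pos.ne'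
  have hpR : (0 : ℝ) < p := by exact_mod_cast hp.pos
  -- norms of columns
  have hnorm : ∀ q, ‖v q‖ = 1 := by
    rintro ⟨a, b, c⟩
    have h := inner_v hp v hv a b c a b c
    simp only [sub_self, zero_mul, zero_add] at h
    have h2 : ⟪v (a, b, c), v (a, b, c)⟫ = 1 := by
      rw [h]
      simp only [if_true, AddChar.map_zero_eq_one, mul_one, Finset.sum_const,
        Finset.card_univ, ZMod.card, nsmul_eq_mul]
      field_simp
    have h4 : ‖v (a, b, c)‖ ^ 2 = 1 := by
      rw [← inner_self_eq_norm_sq (𝕜 := ℂ), h2]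
      simp
    nlinarith [norm_nonneg (v (a, b, c))]
  -- inner products for distinct columns
  have hmain : ∀ a b c a' b' c' : ZMod p, (a, b, c) ≠ (a', b', c') →
      (a ≠ a' → ‖⟪v (a, b, c), v (a', b', c')⟫‖ = 1 / p) ∧
      (a = a' → ⟪v (a, b, c), v (a', b', c')⟫ = 0) := by
    intro a b c a' b' c' hne
    constructor
    · intro ha
      have hd : a' - a ≠ 0 := sub_ne_zero.mpr (Ne.symm ha)
      set φ₀ : ZMod p := (c - c') / (a' - a) with hφ₀
      have hcond : ∀ φ : ZMod p, ((a' - a) * φ + (c' - c) = 0 ↔ φ = φ₀) := by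
        intro φ
        constructor
        · intro h
          rw [hφ₀, eq_div_iff hd]
          linear_combination h
        · rintro rfl
          rw [hφ₀, mul_comm, div_mul_cancel₀ _ hd]
          ring
      have h := inner_v hp v hv a b c a' b' c'
      rw [h]
      have hsum : (∑ φ : ZMod p,
          (if (a' - a) * φ + (c' - c) = 0 then (p : ℂ) * ZMod.stdAddChar ((b' - b) * φ)
           else 0))
          = (p : ℂ) * ZMod.stdAddChar ((b' - b) * φ₀) := by
        rw [Finset.sum_congr rfl fun φ _ => by rw [show ((if (a' - a) * φ + (c' - c) = 0
            then (p : ℂ) * ZMod.stdAddChar ((b' - b) * φ) else 0))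
            = (if φ = φ₀ then (p : ℂ) * ZMod.stdAddChar ((b' - b) * φ) else 0) from by
              simp only [hcond φ]]]
        simp [Finset.sum_ite_eq' Finset.univ φ₀
          (fun φ => (p : ℂ) * ZMod.stdAddChar ((b' - b) * φ))]
      rw [hsum, norm_mul, norm_mul, norm_pow, stdAddChar_norm]
      simp only [norm_div, norm_one, Complex.norm_natCast, mul_one]
      field_simp
    · intro ha
      subst ha
      have h := inner_v hp v hv a b c a b' c'
      by_cases hc : c' = c
      · subst hc
        have hb : b' - b ≠ 0 := by
          intro h0
          exact hne (by rw [sub_eq_zero] at h0; rw [h0])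
        rw [h]
        have hsum : (∑ φ : ZMod p, if (a - a) * φ + (c' - c') = 0
            then (p : ℂ) * ZMod.stdAddChar ((b' - b) * φ) else 0)
            = (p : ℂ) * ∑ φ : ZMod p, ZMod.stdAddChar (φ * (b' - b)) := by
          rw [Finset.mul_sum]
          refine Finset.sum_congr rfl fun φ _ => ?_
          rw [if_pos (by simp), mul_comm (b' - b) φ]
        rw [hsum, sum_stdAddChar_mul hp, if_neg hb, mul_zero, mul_zero]
      · rw [h]
        have hc' : ∀ φ : ZMod p, ¬((a - a) * φ + (c' - c) = 0) := by
          intro φ hφ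
          apply hc
          rw [sub_self, zero_mul, zero_add, sub_eq_zero] at hφ
          exact hφ
        rw [Finset.sum_congr rfl fun φ _ => if_neg (hc' φ)]
        simp
  refine ⟨hnorm, hmain, ?_, ?_⟩
  · rintro ⟨a, b, c⟩ ⟨a', b', c'⟩ hne
    by_cases ha : a = a'
    · rw [(hmain a b c a' b' c' hne).2 ha]
      simp only [norm_zero]
      positivity
    · rw [(hmain a b c a' b' c' hne).1 ha]
  · refine ⟨(0, 0, 0), (1, 0, 0), ?_, ?_⟩
    · exact fun hq => (zero_ne_one (α := ZMod p)) (congrArg Prod.fst hq)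
    · have h01 : (0 : ZMod p) ≠ 1 := zero_ne_one
      exact (hmain 0 0 0 1 0 0
        (fun hq => h01 (congrArg Prod.fst hq))).1 h01
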